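/- arXiv:2307.10657 — 6 statements merged into one kernel-verified Lean document; each statement's English description precedes it below -/
import Mathlib

section
/- With H_L > 0 fixed, H_R = H_L/ν² for ν > 1, c = (ν² + ν + 1)√(H_R)/(ν+1), q₀ = ν² H_R^{3/2}/(ν+1), and H_s = (q₀F)^{2/3}, the condition H_R < H_s < H_L holds if and only if (ν+1)/ν² < F < ν(ν+1). -/
theorem lax_conditions_iff (H_L H_R ν c q₀ F H_s : ℝ)
    (hL : 0 < H_L) (hν : 1 < ν) (hF : 0 < F)
    (hR : H_R = H_L / ν ^ 2)
    (hc : c = (ν ^ 2 + ν + 1) * Real.sqrt H_R / (ν + 1))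
    (hq : q₀ = ν ^ 2 * H_R ^ ((3 : ℝ) / 2) / (ν + 1))
    (hs : H_s = (q₀ * F) ^ ((2 : ℝ) / 3)) :
    (H_R < H_s ∧ H_s < H_L) ↔ ((ν + 1) / ν ^ 2 < F ∧ F < ν * (ν + 1)) := by
  have hν0 : (0:ℝ) < ν := by linarith
  have hν1 : (0:ℝ) < ν + 1 := by linarith
  have hν2 : (0:ℝ) < ν ^ 2 := by positivity
  have hR0 : 0 < H_R := by rw [hR]; positivity
  have hA : 0 < H_R ^ ((3:ℝ)/2) := Real.rpow_pos_of_pos hR0 _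
  set A := H_R ^ ((3:ℝ)/2) with hAdef
  have hq0 : 0 < q₀ := by rw [hq]; positivity
  have ht0 : 0 < q₀ * F := by positivity
  have hRA : H_R = A ^ ((2:ℝ)/3) := by
    rw [hAdef, ← Real.rpow_mul hR0.le]
    norm_num
  have hLA : H_L = (ν ^ 3 * A) ^ ((2:ℝ)/3) := by
    have h1 : ν ^ 3 * A = (ν ^ 2 * H_R) ^ ((3:ℝ)/2) := by
      rw [Real.mul_rpow (by positivity) hR0.le, ← Real.rpow_natCast ν 2,
        ← Real.rpow_mul hν0.le, ← Real.rpow_natCast ν 3]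
      norm_num
      exact Or.inl hAdef
    rw [h1, ← Real.rpow_mul (by positivity)]
    norm_num
    field_simp [hR]
    rw [hR]; field_simp
  have h1 : (H_R < H_s) ↔ A < q₀ * F := by
    rw [hs, hRA, Real.rpow_lt_rpow_iff hA.le ht0.le (by norm_num)]
  have h2 : (H_s < H_L) ↔ q₀ * F < ν ^ 3 * A := by
    rw [hs, hLA, Real.rpow_lt_rpow_iff ht0.le (by positivity) (by norm_num)]
  rw [h1, h2, hq, div_mul_eq_mul_div, lt_div_iff₀ hν1, div_lt_iff₀ hν1,
    div_lt_iff₀ hν2]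
  constructor
  · rintro ⟨ha, hb⟩
    constructor
    · have h3 : A * (ν + 1) < A * (F * ν ^ 2) := by
        calc A * (ν + 1) < ν ^ 2 * A * F := ha
        _ = A * (F * ν ^ 2) := by ring
      exact lt_of_mul_lt_mul_left h3 hA.le
    · have h3 : (ν ^ 2 * A) * F < (ν ^ 2 * A) * (ν * (ν + 1)) := by
        calc (ν ^ 2 * A) * F = ν ^ 2 * A * F := by ring
        _ < ν ^ 3 * A * (ν + 1) := hb
        _ = (ν ^ 2 * A) * (ν * (ν + 1)) := by ring
      exact lt_of_mul_lt_mul_left h3 (by positivity)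
  · rintro ⟨ha, hb⟩
    constructor
    · calc A * (ν + 1) = A * (ν + 1) := rfl
      _ < A * (F * ν ^ 2) := by exact mul_lt_mul_of_pos_left ha hA
      _ = ν ^ 2 * A * F := by ring
    · calc ν ^ 2 * A * F = (ν ^ 2 * A) * F := by ring
      _ < (ν ^ 2 * A) * (ν * (ν + 1)) := by exact mul_lt_mul_of_pos_left hb (by positivity)
      _ = ν ^ 3 * A * (ν + 1) := by ring
end

section
/- Under the scaling H_L = ν² H_R with ν > 1 and H_* = ((−(ν+1) + √(8F²ν⁴ + ν² + 2ν + 1))/(2(ν+1))) H_R, the inequality H_* < H_L holds if and only if F < ((ν+1)√(2(ν²+1)))/(2ν), the equality H_* = H_L holds if and only if F = ((ν+1)√(2(ν²+1)))/(2ν), and H_* > H_L holds if and only if F > ((ν+1)√(2(ν²+1)))/(2ν). -/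
set_option maxHeartbeats 1000000 in
theorem Hstar_vs_HL (H_L H_R ν F H_star : ℝ)
    (hR : 0 < H_R) (hν : 1 < ν) (hF : 0 < F)
    (hL : H_L = ν ^ 2 * H_R)
    (hstar : H_star =
      ((-(ν + 1) + Real.sqrt (8 * F ^ 2 * ν ^ 4 + ν ^ 2 + 2 * ν + 1)) / (2 * (ν + 1))) * H_R) :
    (H_star < H_L ↔ F < ((ν + 1) * Real.sqrt (2 * (ν ^ 2 + 1))) / (2 * ν)) ∧
    (H_star = H_L ↔ F = ((ν + 1) * Real.sqrt (2 * (ν ^ 2 + 1))) / (2 * ν)) ∧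
    (H_L < H_star ↔ ((ν + 1) * Real.sqrt (2 * (ν ^ 2 + 1))) / (2 * ν) < F) := by
  have hν0 : (0:ℝ) < ν := by linarith
  have hν1 : (0:ℝ) < ν + 1 := by linarith
  set F0 : ℝ := ((ν + 1) * Real.sqrt (2 * (ν ^ 2 + 1))) / (2 * ν) with hF0
  have hsq2 : Real.sqrt (2 * (ν ^ 2 + 1)) ^ 2 = 2 * (ν ^ 2 + 1) :=
    Real.sq_sqrt (by positivity)
  have hF0pos : 0 < F0 := by
    have : 0 < Real.sqrt (2 * (ν ^ 2 + 1)) := Real.sqrt_pos.mpr (by positivity)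
    positivity
  have hF0sq : F0 ^ 2 = (ν + 1) ^ 2 * (2 * (ν ^ 2 + 1)) / (4 * ν ^ 2) := by
    rw [hF0, div_pow, mul_pow, hsq2]; ring_nf
  set S : ℝ := 8 * F ^ 2 * ν ^ 4 + ν ^ 2 + 2 * ν + 1 with hS
  have hSnn : 0 ≤ S := by positivity
  have hBpos : 0 < (ν + 1) * (2 * ν ^ 2 + 1) := by positivity
  have h1 : H_star < H_L ↔ F < F0 := by
    rw [hstar, hL, mul_lt_mul_iff_of_pos_right hR, div_lt_iff₀ (by positivity)]
    constructor
    · intro h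
      have hA : Real.sqrt S < (ν + 1) * (2 * ν ^ 2 + 1) := by nlinarith
      have hS2 : S < ((ν + 1) * (2 * ν ^ 2 + 1)) ^ 2 :=
        (Real.sqrt_lt' hBpos).mp hA
      have hFsq : F ^ 2 < F0 ^ 2 := by
        rw [hF0sq, lt_div_iff₀ (by positivity)]
        nlinarith
      by_contra hc
      push_neg at hc
      nlinarith [pow_le_pow_left₀ hF0pos.le hc 2]
    · intro h
      have hFsq : F ^ 2 < F0 ^ 2 := by
        nlinarith [mul_pos (sub_pos.mpr h) (show (0:ℝ) < F0 + F by linarith)]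
      have hS2 : S < ((ν + 1) * (2 * ν ^ 2 + 1)) ^ 2 := by
        rw [hF0sq, lt_div_iff₀ (by positivity)] at hFsq
        nlinarith [mul_lt_mul_of_pos_left hFsq (show (0:ℝ) < 2 * ν ^ 2 by positivity)]
      have hA : Real.sqrt S < (ν + 1) * (2 * ν ^ 2 + 1) :=
        (Real.sqrt_lt' hBpos).mpr hS2
      nlinarith
  have h3 : H_L < H_star ↔ F0 < F := by
    rw [hstar, hL, mul_lt_mul_iff_of_pos_right hR, lt_div_iff₀ (by positivity)]
    constructor
    · intro h
      have hA : (ν + 1) * (2 * ν ^ 2 + 1) < Real.sqrt S := by nlinarith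
      have hS2 : ((ν + 1) * (2 * ν ^ 2 + 1)) ^ 2 < S :=
        (Real.lt_sqrt hBpos.le).mp hA
      have hFsq : F0 ^ 2 < F ^ 2 := by
        rw [hF0sq, div_lt_iff₀ (by positivity)]
        nlinarith
      by_contra hc
      push_neg at hc
      nlinarith [pow_le_pow_left₀ hF.le hc 2]
    · intro h
      have hFsq : F0 ^ 2 < F ^ 2 := by
        nlinarith [mul_pos (sub_pos.mpr h) (show (0:ℝ) < F + F0 by linarith)]
      have hS2 : ((ν + 1) * (2 * ν ^ 2 + 1)) ^ 2 < S := by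
        rw [hF0sq, div_lt_iff₀ (by positivity)] at hFsq
        nlinarith [mul_lt_mul_of_pos_left hFsq (show (0:ℝ) < 2 * ν ^ 2 by positivity)]
      have hA : (ν + 1) * (2 * ν ^ 2 + 1) < Real.sqrt S :=
        (Real.lt_sqrt hBpos.le).mpr hS2
      nlinarith
  refine ⟨h1, ?_, h3⟩
  constructor
  · intro h
    rcases lt_trichotomy F F0 with hc | hc | hc
    · exact absurd (h1.mpr hc) (by rw [h]; exact lt_irrefl _)
    · exact hc
    · exact absurd (h3.mpr hc) (by rw [h]; exact lt_irrefl _)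
  · intro h
    rcases lt_trichotomy H_star H_L with hc | hc | hc
    · exact absurd (h1.mp hc) (by rw [h]; exact lt_irrefl _)
    · exact hc
    · exact absurd (h3.mp hc) (by rw [h]; exact lt_irrefl _)
end

section
/- For any positive reals α, γ and real β, one has inf over y ∈ ℝ of Re(√(−y²α + iyβ + γ)) = min(√γ, |β|/(2√α)) and sup over y ∈ ℝ of Re(√(−y²α + iyβ + γ)) = max(√γ, |β|/(2√α)), where √ denotes the principal square root. -/
open Filter Topology

lemma re_cpow_half (z : ℂ) :
    (z ^ ((1:ℂ)/2)).re = Real.sqrt ((z.re + ‖z‖)/2) := by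
  rcases eq_or_ne z 0 with rfl | hz
  · simp [Complex.zero_cpow (by norm_num : (1:ℂ)/2 ≠ 0)]
  · set w := z ^ ((1:ℂ)/2) with hw
    have hre : 0 ≤ w.re := by
      rw [hw, Complex.cpow_def_of_ne_zero hz, Complex.exp_re]
      apply mul_nonneg (Real.exp_nonneg _)
      apply Real.cos_nonneg_of_mem_Icc
      constructor
      · simp [Complex.log_im]
        nlinarith [Complex.neg_pi_lt_arg z, Real.pi_pos]
      · simp [Complex.log_im]
        nlinarith [Complex.arg_le_pi z, Real.pi_pos]
    have hsq : w ^ 2 = z := by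
      rw [hw, show (1:ℂ)/2 = ((2:ℕ):ℂ)⁻¹ by norm_num]
      exact Complex.cpow_nat_inv_pow z two_ne_zero
    have h1 : z.re = w.re^2 - w.im^2 := by
      rw [← hsq]; simp [pow_two, Complex.mul_re]
    have h2 : ‖z‖ = w.re^2 + w.im^2 := by
      rw [← hsq, norm_pow, ← Complex.normSq_eq_norm_sq, Complex.normSq_apply]; ring
    rw [h1, h2, show (w.re^2 - w.im^2 + (w.re^2 + w.im^2))/2 = w.re^2 by ring,
      Real.sqrt_sq hre]

set_option maxHeartbeats 1000000 in
theorem inf_sup_re_sqrt (α γ β : ℝ) (hα : 0 < α) (hγ : 0 < γ) :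
    (⨅ y : ℝ, ((-(y ^ 2 * α) + y * β * Complex.I + γ : ℂ) ^ ((1 : ℂ) / 2)).re)
      = min (Real.sqrt γ) (|β| / (2 * Real.sqrt α)) ∧
    (⨆ y : ℝ, ((-(y ^ 2 * α) + y * β * Complex.I + γ : ℂ) ^ ((1 : ℂ) / 2)).re)
      = max (Real.sqrt γ) (|β| / (2 * Real.sqrt α)) := by
  set K : ℝ := β^2/(4*α) with hKdef
  set L : ℝ := |β| / (2 * Real.sqrt α) with hLdef
  set m : ℝ := min γ K with hmdef
  set M : ℝ := max γ K with hMdef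
  have hK0 : 0 ≤ K := by positivity
  have hm0 : 0 ≤ m := le_min hγ.le hK0
  have hsa : Real.sqrt α ^ 2 = α := Real.sq_sqrt hα.le
  have hsapos : 0 < Real.sqrt α := Real.sqrt_pos.2 hα
  have hL0 : 0 ≤ L := by positivity
  have hLK : Real.sqrt K = L := by
    have h : K = L^2 := by
      rw [hLdef, div_pow, sq_abs, mul_pow, hsa]; ring_nf; rw [hKdef]; ring
    rw [h, Real.sqrt_sq hL0]
  set g : ℝ → ℝ := fun y => ((γ - y^2*α) + Real.sqrt ((γ - y^2*α)^2 + (y*β)^2))/2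
    with hgdef
  set f : ℝ → ℝ := fun y => Real.sqrt (g y) with hfdef
  have hfeq : ∀ y : ℝ,
      ((-(y ^ 2 * α) + y * β * Complex.I + γ : ℂ) ^ ((1 : ℂ) / 2)).re = f y := by
    intro y
    rw [re_cpow_half]
    show Real.sqrt _ = Real.sqrt (g y)
    have hre : ((-(y ^ 2 * α) + y * β * Complex.I + γ : ℂ)).re = γ - y^2*α := by
      simp [← Complex.ofReal_pow]; ring
    have him : ((-(y ^ 2 * α) + y * β * Complex.I + γ : ℂ)).im = y*β := by
      simp [← Complex.ofReal_pow]
    have habs : ‖((-(y ^ 2 * α) + y * β * Complex.I + γ : ℂ))‖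
        = Real.sqrt ((γ - y^2*α)^2 + (y*β)^2) := by
      rw [Complex.norm_def, Complex.normSq_apply, hre, him]
      congr 1; ring
    rw [hre, habs]
  -- bounds
  have hmK : 4*m*α ≤ β^2 := by
    have h : m ≤ K := min_le_right _ _
    rw [hKdef] at h
    calc 4*m*α ≤ 4*(β^2/(4*α))*α := by nlinarith
      _ = β^2 := by field_simp
  have hMK : β^2 ≤ 4*M*α := by
    have h : K ≤ M := le_max_right _ _
    rw [hKdef] at h
    calc β^2 = 4*(β^2/(4*α))*α := by field_simp
      _ ≤ 4*M*α := by nlinarith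
  have hlow : ∀ y, m ≤ g y := by
    intro y
    set c : ℝ := γ - y^2*α with hc
    set s : ℝ := Real.sqrt (c^2 + (y*β)^2) with hs
    have hs0 : 0 ≤ s := Real.sqrt_nonneg _
    have hmγ : m ≤ γ := min_le_left _ _
    have h1 : (2*m - c)^2 ≤ c^2 + (y*β)^2 := by
      nlinarith [mul_nonneg hm0 (sub_nonneg.2 hmγ), sq_nonneg y,
        mul_nonneg (sq_nonneg y) (sub_nonneg.2 hmK)]
    have h2 : 2*m - c ≤ s := by
      calc 2*m - c ≤ |2*m - c| := le_abs_self _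
        _ = Real.sqrt ((2*m - c)^2) := (Real.sqrt_sq_eq_abs _).symm
        _ ≤ s := Real.sqrt_le_sqrt h1
    show m ≤ (c + s)/2
    linarith
  have hhigh : ∀ y, g y ≤ M := by
    intro y
    set c : ℝ := γ - y^2*α with hc
    set s : ℝ := Real.sqrt (c^2 + (y*β)^2) with hs
    have hMγ : γ ≤ M := le_max_left _ _
    have hM0 : 0 ≤ M := hγ.le.trans hMγ
    have h1 : c^2 + (y*β)^2 ≤ (2*M - c)^2 := by
      nlinarith [mul_nonneg hM0 (sub_nonneg.2 hMγ), sq_nonneg y,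
        mul_nonneg (sq_nonneg y) (sub_nonneg.2 hMK),
        mul_nonneg hM0 (mul_nonneg hα.le (sq_nonneg y))]
    have hc2M : 0 ≤ 2*M - c := by nlinarith [mul_nonneg hα.le (sq_nonneg y)]
    have h2 : s ≤ 2*M - c := by
      calc s ≤ Real.sqrt ((2*M - c)^2) := Real.sqrt_le_sqrt h1
        _ = |2*M - c| := Real.sqrt_sq_eq_abs _
        _ = 2*M - c := abs_of_nonneg hc2M
    show (c + s)/2 ≤ M
    linarith
  have hg0 : g 0 = γ := by
    show ((γ - 0^2*α) + Real.sqrt ((γ - 0^2*α)^2 + (0*β)^2))/2 = γ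
    rw [show (γ - 0^2*α)^2 + (0*β)^2 = γ^2 by ring, Real.sqrt_sq hγ.le]
    ring
  -- the limit at infinity
  set F : ℝ → ℝ := fun u => β^2/(2*(Real.sqrt ((γ*u - α)^2 + β^2*u) + α - γ*u))
    with hFdef
  have hF0 : F 0 = K := by
    show β^2/(2*(Real.sqrt ((γ*0 - α)^2 + β^2*0) + α - γ*0)) = K
    rw [show (γ*0 - α)^2 + β^2*0 = α^2 by ring, Real.sqrt_sq hα.le,
      show 2*(α + α - γ*0) = 4*α by ring]
  have hFc : ContinuousAt F 0 := by
    apply ContinuousAt.div continuousAt_const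
    · fun_prop
    · show 2*(Real.sqrt ((γ*0 - α)^2 + β^2*0) + α - γ*0) ≠ 0
      rw [show (γ*0 - α)^2 + β^2*0 = α^2 by ring, Real.sqrt_sq hα.le,
        show 2*(α + α - γ*0) = 4*α by ring]
      positivity
  have htu : Tendsto (fun y : ℝ => (y^2)⁻¹) atTop (𝓝 0) :=
    tendsto_inv_atTop_zero.comp (tendsto_pow_atTop two_ne_zero)
  have hEq : ∀ᶠ y in atTop, F ((y^2)⁻¹) = g y := by
    filter_upwards [eventually_ge_atTop (1 + Real.sqrt (γ/α))] with y hy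
    have hy0 : (0:ℝ) < y := lt_of_lt_of_le (by positivity) hy
    have hy2 : (0:ℝ) < y^2 := by positivity
    have hyne : y ≠ 0 := hy0.ne'
    have hαy : γ < y^2*α := by
      have h1 : Real.sqrt (γ/α) < y := by nlinarith [Real.sqrt_nonneg (γ/α)]
      have h2 : γ/α < y^2 := by
        nlinarith [Real.sq_sqrt (show (0:ℝ) ≤ γ/α by positivity),
          Real.sqrt_nonneg (γ/α)]
      calc γ = (γ/α)*α := by field_simp
        _ < y^2*α := by nlinarith
    set c : ℝ := γ - y^2*α with hc
    set s : ℝ := Real.sqrt (c^2 + (y*β)^2) with hs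
    have hs0 : 0 ≤ s := Real.sqrt_nonneg _
    have hs2 : s^2 = c^2 + (y*β)^2 := Real.sq_sqrt (by positivity)
    have hsge : -c ≤ s := by
      calc -c ≤ |c| := neg_le_abs c
        _ = Real.sqrt (c^2) := (Real.sqrt_sq_eq_abs _).symm
        _ ≤ s := Real.sqrt_le_sqrt (by nlinarith [sq_nonneg (y*β)])
    have hD : 0 < s - c := by
      have hcneg : 0 < -c := by rw [hc]; linarith
      linarith
    have h1 : γ*(y^2)⁻¹ - α = c * (y^2)⁻¹ := by
      rw [hc]; field_simp
    have hin : (γ*(y^2)⁻¹ - α)^2 + β^2*(y^2)⁻¹ = (s * (y^2)⁻¹)^2 := by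
      rw [h1, mul_pow, mul_pow, hs2]
      field_simp
    have hsqrt : Real.sqrt ((γ*(y^2)⁻¹ - α)^2 + β^2*(y^2)⁻¹) = s * (y^2)⁻¹ := by
      rw [hin, Real.sqrt_sq (by positivity)]
    show β^2/(2*(Real.sqrt ((γ*(y^2)⁻¹ - α)^2 + β^2*(y^2)⁻¹) + α - γ*(y^2)⁻¹))
        = (c + s)/2
    rw [hsqrt]
    have hden : s * (y^2)⁻¹ + α - γ*(y^2)⁻¹ = (s - c)/y^2 := by
      rw [hc]; field_simp; ring
    have key : (c + s) * (s - c) = (y*β)^2 := by linear_combination hs2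
    rw [hden, show 2*((s - c)/y^2) = (2*(s - c))/y^2 by ring, div_div_eq_mul_div,
      div_eq_div_iff (by positivity) two_ne_zero]
    linear_combination (-2:ℝ)*hs2
  have htendg : Tendsto g atTop (𝓝 K) := by
    have h : Tendsto (fun y : ℝ => F ((y^2)⁻¹)) atTop (𝓝 (F 0)) := hFc.tendsto.comp htu
    rw [hF0] at h
    exact h.congr' hEq
  have htendf : Tendsto f atTop (𝓝 L) := by
    have h := htendg.sqrt
    rwa [hLK] at h
  have monoSqrt : Monotone Real.sqrt := fun a b h => Real.sqrt_le_sqrt h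
  have hminsq : Real.sqrt m = min (Real.sqrt γ) L := by
    rw [hmdef, monoSqrt.map_min, hLK]
  have hmaxsq : Real.sqrt M = max (Real.sqrt γ) L := by
    rw [hMdef, monoSqrt.map_max, hLK]
  have hflow : ∀ y, min (Real.sqrt γ) L ≤ f y := fun y => by
    rw [← hminsq]; exact monoSqrt (hlow y)
  have hfhigh : ∀ y, f y ≤ max (Real.sqrt γ) L := fun y => by
    rw [← hmaxsq]; exact monoSqrt (hhigh y)
  have hf0 : f 0 = Real.sqrt γ := by
    show Real.sqrt (g 0) = Real.sqrt γ
    rw [hg0]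
  have hbb : BddBelow (Set.range f) := ⟨min (Real.sqrt γ) L, by
    rintro _ ⟨y, rfl⟩; exact hflow y⟩
  have hba : BddAbove (Set.range f) := ⟨max (Real.sqrt γ) L, by
    rintro _ ⟨y, rfl⟩; exact hfhigh y⟩
  have hrw1 : (⨅ y : ℝ, ((-(y ^ 2 * α) + y * β * Complex.I + γ : ℂ) ^ ((1 : ℂ) / 2)).re)
      = ⨅ y, f y := iInf_congr hfeq
  have hrw2 : (⨆ y : ℝ, ((-(y ^ 2 * α) + y * β * Complex.I + γ : ℂ) ^ ((1 : ℂ) / 2)).re)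
      = ⨆ y, f y := iSup_congr hfeq
  constructor
  · rw [hrw1]
    refine le_antisymm (le_min ?_ ?_) (le_ciInf hflow)
    · calc ⨅ y, f y ≤ f 0 := ciInf_le hbb 0
        _ = Real.sqrt γ := hf0
    · exact ge_of_tendsto htendf (Eventually.of_forall fun y => ciInf_le hbb y)
  · rw [hrw2]
    refine le_antisymm (ciSup_le hfhigh) (max_le ?_ ?_)
    · calc Real.sqrt γ = f 0 := hf0.symm
        _ ≤ ⨆ y, f y := le_ciSup hba 0
    · exact le_of_tendsto htendf (Eventually.of_forall fun y => le_ciSup hba y)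
end

section
/- Let ν > 1, H_R > 0, h ∈ {H_L, H_R} with H_L = ν²H_R, c = (ν²+ν+1)√(H_R)/(ν+1), q₀ = ν²H_R^{3/2}/(ν+1). Then c − √h − 2√h/F² equals √(H_R)·ν(ν²/(ν+1) − 2/F²) when h = H_R, and equals √(H_L)(1/(ν(ν+1)) − 2/F²) when h = H_L. In particular, for h = H_L, the inequality c − √(H_L) > 2√(H_L)/F² holds if and only if F² > 2ν(ν+1). -/
theorem absolute_instability_criterion (ν H_R H_L c q₀ F : ℝ)
    (hν : 1 < ν) (hR : 0 < H_R) (hF : 0 < F)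
    (hL : H_L = ν ^ 2 * H_R)
    (hc : c = (ν ^ 2 + ν + 1) * Real.sqrt H_R / (ν + 1))
    (hq : q₀ = ν ^ 2 * H_R ^ ((3 : ℝ) / 2) / (ν + 1)) :
    c - Real.sqrt H_R - 2 * Real.sqrt H_R / F ^ 2
      = Real.sqrt H_R * (ν ^ 2 / (ν + 1) - 2 / F ^ 2) ∧
    c - Real.sqrt H_L - 2 * Real.sqrt H_L / F ^ 2
      = Real.sqrt H_L * (1 / (ν * (ν + 1)) - 2 / F ^ 2) ∧
    (2 * Real.sqrt H_L / F ^ 2 < c - Real.sqrt H_L ↔ 2 * ν * (ν + 1) < F ^ 2) := by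
  have hν0 : 0 < ν := lt_trans one_pos hν
  have hs : 0 < Real.sqrt H_R := Real.sqrt_pos.mpr hR
  have hSL : Real.sqrt H_L = ν * Real.sqrt H_R := by
    rw [hL, Real.sqrt_mul (by positivity), Real.sqrt_sq hν0.le]
  have hν1 : (0:ℝ) < ν + 1 := by linarith
  have hF2 : (0:ℝ) < F ^ 2 := by positivity
  refine ⟨?_, ?_, ?_⟩
  · rw [hc]; field_simp; ring
  · rw [hc, hSL]; field_simp; ring
  · rw [hc, hSL]
    constructor
    · intro h
      rw [div_lt_iff₀ hF2] at h
      have h2 : 2 * ν * Real.sqrt H_R * (ν * (ν + 1)) <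
          ((ν ^ 2 + ν + 1) * Real.sqrt H_R / (ν + 1) - ν * Real.sqrt H_R) * F ^ 2 * (ν * (ν + 1)) := by
        nlinarith [mul_pos hν0 hν1]
      have h3 : ((ν ^ 2 + ν + 1) * Real.sqrt H_R / (ν + 1) - ν * Real.sqrt H_R) * (ν + 1)
          = Real.sqrt H_R := by field_simp; ring
      nlinarith [h2, h3, mul_pos hν0 hν1]
    · intro h
      rw [div_lt_iff₀ hF2]
      have h3 : ((ν ^ 2 + ν + 1) * Real.sqrt H_R / (ν + 1) - ν * Real.sqrt H_R) * (ν * (ν + 1))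
          = ν * Real.sqrt H_R := by field_simp; ring
      have hA : 0 < (ν ^ 2 + ν + 1) * Real.sqrt H_R / (ν + 1) - ν * Real.sqrt H_R := by
        have := mul_pos hν0 hν1
        nlinarith [mul_pos hν0 hs]
      nlinarith [mul_lt_mul_of_pos_left h hA]
end

section
/- For ν > 1, let H_R > 0, H_L = ν²H_R, c = (ν²+ν+1)√(H_R)/(ν+1), q₀ = ν²H_R^{3/2}/(ν+1), and define the cubic Z(h) = h³ − (F²cq₀/2)h + (F²q₀²)/2. Then Z(H_L) > 0 if and only if F < √(2ν(ν+1)). -/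
theorem cubic_positive_iff (ν H_R H_L c q₀ F : ℝ) (Z : ℝ → ℝ)
    (hν : 1 < ν) (hR : 0 < H_R) (hF : 0 < F)
    (hL : H_L = ν ^ 2 * H_R)
    (hc : c = (ν ^ 2 + ν + 1) * Real.sqrt H_R / (ν + 1))
    (hq : q₀ = ν ^ 2 * H_R ^ ((3 : ℝ) / 2) / (ν + 1))
    (hZ : ∀ h, Z h = h ^ 3 - F ^ 2 * c * q₀ / 2 * h + F ^ 2 * q₀ ^ 2 / 2) :
    0 < Z H_L ↔ F < Real.sqrt (2 * ν * (ν + 1)) := by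
  set s := Real.sqrt H_R with hsdef
  have hs : 0 < s := Real.sqrt_pos.2 hR
  have hs2 : s ^ 2 = H_R := Real.sq_sqrt hR.le
  have h32 : H_R ^ ((3 : ℝ) / 2) = s ^ 3 := by
    rw [hsdef, Real.sqrt_eq_rpow, ← Real.rpow_natCast (H_R ^ ((1:ℝ)/2)) 3,
      ← Real.rpow_mul hR.le]
    norm_num
  have hν0 : (0:ℝ) < ν := by linarith
  have hν1 : (0:ℝ) < ν + 1 := by linarith
  have key : Z H_L = (ν ^ 5 * s ^ 6 * (ν + 1) / (2 * (ν + 1) ^ 2)) *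
      (2 * ν * (ν + 1) - F ^ 2) := by
    rw [hZ, hL, hc, hq, h32, ← hs2]
    field_simp
    ring
  have hpos : 0 < ν ^ 5 * s ^ 6 * (ν + 1) / (2 * (ν + 1) ^ 2) := by positivity
  rw [key, show F < Real.sqrt (2 * ν * (ν + 1)) ↔ F ^ 2 < 2 * ν * (ν + 1) from
    Real.lt_sqrt hF.le]
  constructor
  · intro h; nlinarith
  · intro h; exact mul_pos hpos (by linarith)
end

section
/- Let H > 0 be a C¹ function, c, q₀ real with Q := cH − q₀, F > 0, a := H/F² − (c − Q/H)², and define f₂ := −(1 − 2(c − Q/H)·Q/H² − a′)/a. If H satisfies the profile ODE a·H′ = (H³ − (cH − q₀)²)/H² on an interval where a ≠ 0 and H′ ≠ 0, then H″ = −f₂·H′ on that interval. -/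
theorem second_derivative_identity (H : ℝ → ℝ) (c q₀ F x₁ x₂ : ℝ)
    (hF : 0 < F) (hH : ContDiff ℝ 1 H) (hpos : ∀ x, 0 < H x)
    (Q a f₂ : ℝ → ℝ)
    (hQ : ∀ x, Q x = c * H x - q₀)
    (ha : ∀ x, a x = H x / F ^ 2 - (c - Q x / H x) ^ 2)
    (hf₂ : ∀ x, f₂ x =
      -(1 - 2 * (c - Q x / H x) * (Q x / H x ^ 2) - deriv a x) / a x)
    (hODE : ∀ x ∈ Set.Ioo x₁ x₂,
      a x * deriv H x = ((H x) ^ 3 - (c * H x - q₀) ^ 2) / (H x) ^ 2)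
    (hane : ∀ x ∈ Set.Ioo x₁ x₂, a x ≠ 0)
    (hH'ne : ∀ x ∈ Set.Ioo x₁ x₂, deriv H x ≠ 0) :
    ∀ x ∈ Set.Ioo x₁ x₂, deriv (deriv H) x = -f₂ x * deriv H x := by
  intro x hx
  have hmem : Set.Ioo x₁ x₂ ∈ nhds x := isOpen_Ioo.mem_nhds hx
  have hHd : ∀ y, HasDerivAt H (deriv H y) y := fun y =>
    ((hH.differentiable one_ne_zero) y).hasDerivAt
  have hhx : H x ≠ 0 := (hpos x).ne'
  have hax : a x ≠ 0 := hane x hx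
  have hFne : F ≠ 0 := hF.ne'
  -- a rewritten as a smooth function of H
  have hA : a = fun y => H y / F ^ 2 - q₀ ^ 2 / (H y) ^ 2 := by
    funext y
    have hy := (hpos y).ne'
    rw [ha, hQ]
    field_simp
    ring
  -- a is differentiable at x
  have hDa : HasDerivAt a (deriv a x) x := by
    have h1 : HasDerivAt a
        (deriv H x / F ^ 2 -
          (0 * (H x) ^ 2 - q₀ ^ 2 * (2 * H x ^ 1 * deriv H x)) / ((H x) ^ 2) ^ 2) x := by
      rw [hA]
      exact ((hHd x).div_const _).sub
        ((hasDerivAt_const x (q₀ ^ 2)).div ((hHd x).pow 2) (pow_ne_zero 2 hhx))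
    exact h1.deriv ▸ h1
  -- derivative of the right-hand side of the ODE divided by H² a
  have hN : HasDerivAt (fun y => (H y) ^ 3 - (c * H y - q₀) ^ 2)
      ((3 : ℕ) * (H x) ^ 2 * deriv H x -
        (2 : ℕ) * (c * H x - q₀) ^ 1 * (c * deriv H x)) x :=
    ((hHd x).pow 3).sub ((((hHd x).const_mul c).sub_const q₀).pow 2)
  have hD : HasDerivAt (fun y => (H y) ^ 2 * a y)
      ((2 : ℕ) * H x ^ 1 * deriv H x * a x + (H x) ^ 2 * deriv a x) x :=
    ((hHd x).pow 2).mul hDa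
  have hDne : (H x) ^ 2 * a x ≠ 0 := mul_ne_zero (pow_ne_zero 2 hhx) hax
  have hP : HasDerivAt (fun y => ((H y) ^ 3 - (c * H y - q₀) ^ 2) / ((H y) ^ 2 * a y)) _ x :=
    hN.div hD hDne
  -- deriv H agrees with the explicit function on the interval
  have heq : deriv H =ᶠ[nhds x]
      (fun y => ((H y) ^ 3 - (c * H y - q₀) ^ 2) / ((H y) ^ 2 * a y)) := by
    filter_upwards [hmem] with y hy
    have hode := hODE y hy
    have hy0 : H y ≠ 0 := (hpos y).ne'
    have hay := hane y hy
    field_simp at hode ⊢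
    linarith [hode]
  have hdd := heq.deriv_eq
  rw [hdd, hP.deriv]
  -- express deriv H x via the ODE
  have hh' : deriv H x = ((H x) ^ 3 - (c * H x - q₀) ^ 2) / ((H x) ^ 2 * a x) := by
    have hode := hODE x hx
    field_simp at hode ⊢
    linarith [hode]
  rw [hf₂, hQ, hh']
  have hqh : c - (c * H x - q₀) / H x = q₀ / H x := by field_simp; ring
  rw [hqh]
  field_simp
  ring
end
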